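/- Let R be a finite commutative ring, 0 ≤ m_1 ≤ m ≤ n, and let P be an m-subspace of R^n. Then the number of m_1-subspaces of R^n contained in P equals the number N_R(m_1, m) of m_1-subspaces of R^m; in particular it is independent of the choice of P. -/

import Mathlib

open Matrix

/-- A submodule of `R^n` is a `k`-subspace if it is generated by the rows of a
`k × n` matrix with a right inverse. -/
def IsSubspace (R : Type*) [CommRing R] (k n : ℕ)
    (P : Submodule R (Fin n → R)) : Prop :=
  ∃ A : Matrix (Fin k) (Fin n) R, (∃ B : Matrix (Fin n) (Fin k) R, A * B = 1) ∧
    P = Submodule.span R (Set.range fun i : Fin k => A i)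

private lemma map_span_rows {R : Type*} [CommRing R] {k m n : ℕ}
    (C : Matrix (Fin k) (Fin m) R) (A : Matrix (Fin m) (Fin n) R) :
    Submodule.map A.vecMulLinear
      (Submodule.span R (Set.range fun i : Fin k => C i)) =
      Submodule.span R (Set.range fun i : Fin k => (C * A) i) := by
  rw [Submodule.map_span, ← Set.range_comp]
  congr 1

theorem card_subspaces_contained_in {R : Type*} [CommRing R] [Fintype R]
    {m₁ m n : ℕ} (h1 : m₁ ≤ m) (h2 : m ≤ n)
    (P : Submodule R (Fin n → R)) (hP : IsSubspace R m n P) :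
    Nat.card {Q : Submodule R (Fin n → R) // IsSubspace R m₁ n Q ∧ Q ≤ P} =
      Nat.card {Q : Submodule R (Fin m → R) // IsSubspace R m₁ m Q} := by
  obtain ⟨A, ⟨B, hAB⟩, hPspan⟩ := hP
  have hGF : ∀ x : Fin m → R, B.vecMulLinear (A.vecMulLinear x) = x := by
    intro x
    simp [Matrix.vecMul_vecMul, hAB]
  have hrange : LinearMap.range A.vecMulLinear = P := by
    rw [range_vecMulLinear, hPspan]; rfl
  have hFG : ∀ y ∈ P, A.vecMulLinear (B.vecMulLinear y) = y := by
    intro y hy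
    rw [← hrange] at hy
    obtain ⟨x, rfl⟩ := hy
    rw [hGF]
  have hmapGF : ∀ (Q : Submodule R (Fin m → R)),
      Submodule.map B.vecMulLinear (Submodule.map A.vecMulLinear Q) = Q := by
    intro Q
    ext y
    simp only [Submodule.mem_map]
    constructor
    · rintro ⟨z, ⟨x, hx, rfl⟩, rfl⟩
      rw [hGF]; exact hx
    · intro hy
      exact ⟨A.vecMulLinear y, ⟨y, hy, rfl⟩, hGF y⟩
  have hmapFG : ∀ (Q : Submodule R (Fin n → R)), Q ≤ P →
      Submodule.map A.vecMulLinear (Submodule.map B.vecMulLinear Q) = Q := by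
    intro Q hQP
    ext y
    simp only [Submodule.mem_map]
    constructor
    · rintro ⟨z, ⟨x, hx, rfl⟩, rfl⟩
      rw [hFG x (hQP hx)]; exact hx
    · intro hy
      exact ⟨B.vecMulLinear y, ⟨y, hy, rfl⟩, hFG y (hQP hy)⟩
  refine Nat.card_eq_of_bijective
    (fun Q => ⟨Submodule.map B.vecMulLinear Q.1, ?_⟩) ⟨?_, ?_⟩
  · obtain ⟨Q, ⟨C, ⟨D, hCD⟩, hQ⟩, hQP⟩ := Q
    refine ⟨C * B, ⟨A * D, ?_⟩, ?_⟩
    · have hrows : ∀ i, C i ∈ P := by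
        intro i
        apply hQP
        rw [hQ]
        exact Submodule.subset_span ⟨i, rfl⟩
      have hCBA : C * B * A = C := by
        ext i j
        have h := congrFun (hFG (C i) (hrows i)) j
        simpa [Matrix.vecMul_vecMul, Matrix.mul_apply, Matrix.vecMul,
          dotProduct] using h
      calc C * B * (A * D) = C * B * A * D := by rw [← Matrix.mul_assoc]
        _ = C * D := by rw [hCBA]
        _ = 1 := hCD
    · show Submodule.map B.vecMulLinear Q = _
      rw [hQ, map_span_rows]
  · rintro ⟨Q₁, hQ₁, hQ₁P⟩ ⟨Q₂, hQ₂, hQ₂P⟩ h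
    have h' : Submodule.map B.vecMulLinear Q₁ = Submodule.map B.vecMulLinear Q₂ :=
      congrArg Subtype.val h
    simp only [Subtype.mk.injEq]
    rw [← hmapFG Q₁ hQ₁P, ← hmapFG Q₂ hQ₂P, h']
  · rintro ⟨Q, C, ⟨D, hCD⟩, hQ⟩
    refine ⟨⟨Submodule.map A.vecMulLinear Q, ⟨?_, ?_⟩⟩, ?_⟩
    · exact ⟨C * A, ⟨B * D, by rw [Matrix.mul_assoc, ← Matrix.mul_assoc A, hAB,
        Matrix.one_mul, hCD]⟩, by rw [hQ, map_span_rows]⟩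
    · rw [← hrange]; exact LinearMap.map_le_range
    · ext : 1
      exact hmapGF Q
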